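/- Let f be a real-valued function on [0,1]² that is Lipschitz continuous with constant L with respect to the Euclidean metric, and for n ≥ 1 let f̲_n and f̄_n be its dyadic lower and upper approximations on the uniform 2^n × 2^n grid. Then |sup over copula measures μ of ∫_{[0,1)²} f̄_n dμ − sup over copula measures μ of ∫_{[0,1)²} f̲_n dμ| ≤ L · √2 / 2^n. -/

import Mathlib

open MeasureTheory Set

/-- A copula measure: a probability measure on the plane whose marginals are
Lebesgue measure restricted to `[0,1)`. -/
def IsCopulaMeasure (μ : Measure (ℝ × ℝ)) : Prop :=
  IsProbabilityMeasure μ ∧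
  μ.map Prod.fst = volume.restrict (Ico (0:ℝ) 1) ∧
  μ.map Prod.snd = volume.restrict (Ico (0:ℝ) 1)

/-- The half-open grid cell `[(i)/m, (i+1)/m) × [(j)/m, (j+1)/m)` (0-indexed). -/
def gridCell (m : ℕ) (i j : Fin m) : Set (ℝ × ℝ) :=
  Ico (((i : ℕ) : ℝ) / m) ((((i : ℕ) : ℝ) + 1) / m) ×ˢ
    Ico (((j : ℕ) : ℝ) / m) ((((j : ℕ) : ℝ) + 1) / m)

/-- The closure of the grid cell. -/
def closedCell (m : ℕ) (i j : Fin m) : Set (ℝ × ℝ) :=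
  Icc (((i : ℕ) : ℝ) / m) ((((i : ℕ) : ℝ) + 1) / m) ×ˢ
    Icc (((j : ℕ) : ℝ) / m) ((((j : ℕ) : ℝ) + 1) / m)

lemma idx_exists (m : ℕ) (hm : 0 < m) {x : ℝ} (hx : x ∈ Ico (0:ℝ) 1) :
    ∃ i : Fin m, x ∈ Ico (((i:ℕ):ℝ)/m) ((((i:ℕ):ℝ)+1)/m) := by
  have hm' : (0:ℝ) < m := by exact_mod_cast hm
  have h1 : (0:ℝ) ≤ x * m := mul_nonneg hx.1 hm'.le
  have h2 : x * m < m := by nlinarith [hx.2]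
  refine ⟨⟨⌊x*m⌋₊, ?_⟩, ?_, ?_⟩
  · have := (Nat.floor_lt h1).2 h2
    exact_mod_cast this
  · rw [div_le_iff₀ hm']
    exact Nat.floor_le h1
  · rw [lt_div_iff₀ hm']
    exact Nat.lt_floor_add_one (x*m)

lemma idx_unique {m : ℕ} (hm : (0:ℝ) < m) {i i' : ℕ} {x : ℝ}
    (h : x ∈ Ico ((i:ℝ)/m) (((i:ℝ)+1)/m)) (h' : x ∈ Ico ((i':ℝ)/m) (((i':ℝ)+1)/m)) :
    i = i' := by
  have a : ((i:ℝ))/m < ((i':ℝ)+1)/m := h.1.trans_lt h'.2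
  have b : ((i':ℝ))/m < ((i:ℝ)+1)/m := h'.1.trans_lt h.2
  have a' : (i:ℝ) < (i':ℝ)+1 := by
    rw [div_lt_div_iff₀ hm hm] at a; exact lt_of_mul_lt_mul_right a hm.le
  have b' : (i':ℝ) < (i:ℝ)+1 := by
    rw [div_lt_div_iff₀ hm hm] at b; exact lt_of_mul_lt_mul_right b hm.le
  have : i < i' + 1 := by exact_mod_cast a'
  have : i' < i + 1 := by exact_mod_cast b'
  omega

lemma gridCell_subset_closedCell (m : ℕ) (i j : Fin m) :
    gridCell m i j ⊆ closedCell m i j :=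
  Set.prod_mono Ico_subset_Icc_self Ico_subset_Icc_self

lemma fin_div_nonneg {m : ℕ} (i : Fin m) : (0:ℝ) ≤ ((i:ℕ):ℝ)/m :=
  div_nonneg (Nat.cast_nonneg _) (Nat.cast_nonneg _)

lemma fin_succ_div_le_one {m : ℕ} (i : Fin m) : (((i:ℕ):ℝ)+1)/m ≤ 1 := by
  have hm : (0:ℝ) < m := by exact_mod_cast i.pos
  rw [div_le_one hm]
  have : (i:ℕ) + 1 ≤ m := i.2
  exact_mod_cast this

lemma gridCell_subset_unit (m : ℕ) (i j : Fin m) :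
    gridCell m i j ⊆ Ico (0:ℝ) 1 ×ˢ Ico (0:ℝ) 1 :=
  Set.prod_mono (Ico_subset_Ico (fin_div_nonneg i) (fin_succ_div_le_one i))
    (Ico_subset_Ico (fin_div_nonneg j) (fin_succ_div_le_one j))

lemma closedCell_subset_unit (m : ℕ) (i j : Fin m) :
    closedCell m i j ⊆ Icc (0:ℝ) 1 ×ˢ Icc (0:ℝ) 1 :=
  Set.prod_mono (Icc_subset_Icc (fin_div_nonneg i) (fin_succ_div_le_one i))
    (Icc_subset_Icc (fin_div_nonneg j) (fin_succ_div_le_one j))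

lemma cell_dist {m : ℕ} {i j : Fin m} {a b : ℝ × ℝ}
    (ha : a ∈ closedCell m i j) (hb : b ∈ closedCell m i j) :
    Real.sqrt ((a.1 - b.1)^2 + (a.2 - b.2)^2) ≤ Real.sqrt 2 / m := by
  have hm : (0:ℝ) < m := by exact_mod_cast i.pos
  have key : ∀ k : ℕ, ∀ u v : ℝ, u ∈ Icc ((k:ℝ)/m) (((k:ℝ)+1)/m) →
      v ∈ Icc ((k:ℝ)/m) (((k:ℝ)+1)/m) → |u - v| ≤ 1/m := by
    intro k u v hu hv
    have e : ((k:ℝ)+1)/m - (k:ℝ)/m = 1/m := by field_simp; ring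
    rw [abs_le]
    constructor <;> simp only [mem_Icc] at hu hv <;> linarith [hu.1, hu.2, hv.1, hv.2]
  have h1 := key _ _ _ ha.1 hb.1
  have h2 := key _ _ _ ha.2 hb.2
  have hs : (a.1 - b.1)^2 + (a.2 - b.2)^2 ≤ 2/m^2 := by
    have e1 : (a.1 - b.1)^2 ≤ (1/m)^2 := sq_le_sq' (neg_le_of_abs_le h1) (le_of_abs_le h1)
    have e2 : (a.2 - b.2)^2 ≤ (1/m)^2 := sq_le_sq' (neg_le_of_abs_le h2) (le_of_abs_le h2)
    have e3 : (1/(m:ℝ))^2 + (1/(m:ℝ))^2 = 2/m^2 := by ring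
    linarith
  calc Real.sqrt ((a.1 - b.1)^2 + (a.2 - b.2)^2) ≤ Real.sqrt (2/m^2) :=
        Real.sqrt_le_sqrt hs
    _ = Real.sqrt 2 / m := by
        rw [show (2:ℝ)/m^2 = (Real.sqrt 2 / m)^2 by
          rw [div_pow, Real.sq_sqrt (by norm_num)]]
        exact Real.sqrt_sq (div_nonneg (Real.sqrt_nonneg 2) hm.le)

/-- Upper step function. -/
noncomputable def guF (f : ℝ × ℝ → ℝ) (m : ℕ) : ℝ × ℝ → ℝ := fun p =>
  ∑ ij : Fin m × Fin m,
    (gridCell m ij.1 ij.2).indicator (fun _ => sSup (f '' closedCell m ij.1 ij.2)) p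

/-- Lower step function. -/
noncomputable def glF (f : ℝ × ℝ → ℝ) (m : ℕ) : ℝ × ℝ → ℝ := fun p =>
  ∑ ij : Fin m × Fin m,
    (gridCell m ij.1 ij.2).indicator (fun _ => sInf (f '' closedCell m ij.1 ij.2)) p

lemma measurableSet_gridCell (m : ℕ) (i j : Fin m) : MeasurableSet (gridCell m i j) :=
  (measurableSet_Ico).prod measurableSet_Ico

lemma cell_mem_unique {m : ℕ} {i j i' j' : Fin m} {p : ℝ × ℝ}
    (h : p ∈ gridCell m i j) (h' : p ∈ gridCell m i' j') : i = i' ∧ j = j' := by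
  have hm : (0:ℝ) < m := by exact_mod_cast i.pos
  exact ⟨Fin.ext (idx_unique hm h.1 h'.1), Fin.ext (idx_unique hm h.2 h'.2)⟩

lemma step_eq {f : ℝ × ℝ → ℝ} {m : ℕ} (hm : 0 < m) {p : ℝ × ℝ}
    (hp : p ∈ Ico (0:ℝ) 1 ×ˢ Ico (0:ℝ) 1) :
    ∃ i j : Fin m, p ∈ gridCell m i j ∧
      guF f m p = sSup (f '' closedCell m i j) ∧
      glF f m p = sInf (f '' closedCell m i j) := by
  obtain ⟨i, hi⟩ := idx_exists m hm hp.1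
  obtain ⟨j, hj⟩ := idx_exists m hm hp.2
  have hpc : p ∈ gridCell m i j := ⟨hi, hj⟩
  refine ⟨i, j, hpc, ?_, ?_⟩ <;>
  · simp only [guF, glF]
    rw [Finset.sum_eq_single_of_mem (i, j) (Finset.mem_univ _)]
    · rw [indicator_of_mem hpc]
    · intro ij _ hne
      rw [indicator_of_notMem]
      intro hmem
      obtain ⟨h1, h2⟩ := cell_mem_unique hmem hpc
      exact hne (Prod.ext h1 h2)

lemma step_zero {f : ℝ × ℝ → ℝ} {m : ℕ} {p : ℝ × ℝ}
    (hp : p ∉ Ico (0:ℝ) 1 ×ˢ Ico (0:ℝ) 1) :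
    guF f m p = 0 ∧ glF f m p = 0 := by
  constructor <;>
  · refine Finset.sum_eq_zero fun ij _ => ?_
    exact indicator_of_notMem (fun hmem => hp (gridCell_subset_unit m ij.1 ij.2 hmem)) _

lemma step_integrable {m : ℕ} (g : Fin m × Fin m → ℝ) (μ : Measure (ℝ × ℝ))
    [IsFiniteMeasure μ] :
    Integrable (fun p => ∑ ij : Fin m × Fin m,
      (gridCell m ij.1 ij.2).indicator (fun _ => g ij) p) μ := by
  apply integrable_finset_sum
  intro ij _
  exact (integrable_const _).indicator (measurableSet_gridCell m ij.1 ij.2)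

lemma guF_integrable {f : ℝ × ℝ → ℝ} {m : ℕ} (μ : Measure (ℝ × ℝ)) [IsFiniteMeasure μ] :
    Integrable (guF f m) μ := step_integrable _ μ

lemma glF_integrable {f : ℝ × ℝ → ℝ} {m : ℕ} (μ : Measure (ℝ × ℝ)) [IsFiniteMeasure μ] :
    Integrable (glF f m) μ := step_integrable _ μ

theorem stmt_13 (f : ℝ × ℝ → ℝ) (L : ℝ)
    (hlip : ∀ p ∈ Icc (0:ℝ) 1 ×ˢ Icc (0:ℝ) 1, ∀ q ∈ Icc (0:ℝ) 1 ×ˢ Icc (0:ℝ) 1,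
      |f p - f q| ≤ L * Real.sqrt ((p.1 - q.1) ^ 2 + (p.2 - q.2) ^ 2))
    (n : ℕ) (hn : 1 ≤ n) (fl fu : ℝ × ℝ → ℝ)
    (hfl : ∀ i j : Fin (2 ^ n), ∀ p ∈ gridCell (2 ^ n) i j,
      IsLeast (f '' closedCell (2 ^ n) i j) (fl p))
    (hfu : ∀ i j : Fin (2 ^ n), ∀ p ∈ gridCell (2 ^ n) i j,
      IsGreatest (f '' closedCell (2 ^ n) i j) (fu p)) :
    |sSup {x : ℝ | ∃ μ : Measure (ℝ × ℝ), IsCopulaMeasure μ ∧ x = ∫ p, fu p ∂μ} -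
      sSup {x : ℝ | ∃ μ : Measure (ℝ × ℝ), IsCopulaMeasure μ ∧ x = ∫ p, fl p ∂μ}| ≤
      L * Real.sqrt 2 / 2 ^ n := by
  set m := 2 ^ n with hm_def
  have hm : 0 < m := Nat.pow_pos (by norm_num)
  have hmR : ((m:ℕ):ℝ) = (2:ℝ) ^ n := by push_cast [hm_def]; ring
  set S := Ico (0:ℝ) 1 ×ˢ Ico (0:ℝ) 1 with hS_def
  set c := L * Real.sqrt 2 / 2 ^ n with hc_def
  -- L is nonneg
  have h00 : ((0:ℝ), (0:ℝ)) ∈ Icc (0:ℝ) 1 ×ˢ Icc (0:ℝ) 1 := by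
    constructor <;> simp
  have h10 : ((1:ℝ), (0:ℝ)) ∈ Icc (0:ℝ) 1 ×ˢ Icc (0:ℝ) 1 := by
    constructor <;> simp
  have hL : 0 ≤ L := by
    have := hlip (0,0) h00 (1,0) h10
    simp only at this
    rw [show ((0:ℝ)-1)^2 + ((0:ℝ)-0)^2 = 1 by norm_num, Real.sqrt_one, mul_one] at this
    exact le_trans (abs_nonneg _) this
  have hc_nonneg : 0 ≤ c := by
    apply div_nonneg (mul_nonneg hL (Real.sqrt_nonneg 2))
    positivity
  set M := max 0 (f (0,0) + L * Real.sqrt 2) with hM_def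
  -- pointwise facts about the step functions
  have hdiff : ∀ p : ℝ × ℝ, glF f m p ≤ guF f m p ∧ guF f m p ≤ glF f m p + c ∧
      guF f m p ≤ M := by
    intro p
    by_cases hp : p ∈ S
    · obtain ⟨i, j, hpc, hgu, hgl⟩ := step_eq hm hp
      have hg := hfu i j p hpc
      have hl := hfl i j p hpc
      rw [hgu, hgl, hg.csSup_eq, hl.csInf_eq]
      obtain ⟨a, ha, hfa⟩ := hg.1
      obtain ⟨b, hb, hfb⟩ := hl.1
      have haU := closedCell_subset_unit m i j ha
      have hbU := closedCell_subset_unit m i j hb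
      refine ⟨hl.2 hg.1, ?_, ?_⟩
      · have hd := cell_dist ha hb
        have := hlip a haU b hbU
        have h1 : f a - f b ≤ L * (Real.sqrt 2 / m) :=
          le_trans (le_trans (le_abs_self _) this)
            (mul_le_mul_of_nonneg_left hd hL)
        rw [← hfa, ← hfb]
        have hcm : L * (Real.sqrt 2 / (m:ℝ)) = c := by
          rw [hc_def, ← hmR]; ring
        rw [hcm] at h1
        linarith
      · have hd : Real.sqrt ((a.1 - 0)^2 + (a.2 - 0)^2) ≤ Real.sqrt 2 := by
          apply Real.sqrt_le_sqrt
          have := haU.1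
          have := haU.2
          simp only [mem_Icc] at *
          nlinarith [haU.1.1, haU.1.2, haU.2.1, haU.2.2]
        have := hlip a haU (0,0) h00
        simp only at this
        have h2 : f a - f (0,0) ≤ L * Real.sqrt 2 :=
          le_trans (le_trans (le_abs_self _) this) (mul_le_mul_of_nonneg_left hd hL)
        rw [← hfa]
        calc f a ≤ f (0,0) + L * Real.sqrt 2 := by linarith
          _ ≤ M := le_max_right _ _
    · obtain ⟨h1, h2⟩ := step_zero (f := f) (m := m) hp
      rw [h1, h2]
      exact ⟨le_refl _, by linarith, le_max_left _ _⟩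
  -- per-measure integral facts
  have key : ∀ μ : Measure (ℝ × ℝ), IsCopulaMeasure μ →
      (∫ p, fl p ∂μ ≤ ∫ p, fu p ∂μ) ∧ (∫ p, fu p ∂μ ≤ ∫ p, fl p ∂μ + c) ∧
      (∫ p, fu p ∂μ ≤ M) := by
    intro μ ⟨hprob, hfst, hsnd⟩
    haveI := hprob
    have hS_null : μ Sᶜ = 0 := by
      have h1 : μ (Prod.fst ⁻¹' Ico (0:ℝ) 1) = 1 := by
        rw [← Measure.map_apply measurable_fst measurableSet_Ico, hfst,
          Measure.restrict_apply_self, Real.volume_Ico]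
        norm_num
      have h2 : μ (Prod.snd ⁻¹' Ico (0:ℝ) 1) = 1 := by
        rw [← Measure.map_apply measurable_snd measurableSet_Ico, hsnd,
          Measure.restrict_apply_self, Real.volume_Ico]
        norm_num
      have hSeq : S = Prod.fst ⁻¹' Ico (0:ℝ) 1 ∩ Prod.snd ⁻¹' Ico (0:ℝ) 1 :=
        Set.prod_eq _ _
      have hc1 : μ (Prod.fst ⁻¹' Ico (0:ℝ) 1)ᶜ = 0 := by
        rw [measure_compl (measurable_fst measurableSet_Ico) (measure_ne_top μ _), h1,
          measure_univ, tsub_self]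
      have hc2 : μ (Prod.snd ⁻¹' Ico (0:ℝ) 1)ᶜ = 0 := by
        rw [measure_compl (measurable_snd measurableSet_Ico) (measure_ne_top μ _), h2,
          measure_univ, tsub_self]
      rw [hSeq, Set.compl_inter]
      exact le_antisymm (le_trans (measure_union_le _ _) (by rw [hc1, hc2]; simp))
        (by simp)
    have hae_mem : ∀ᵐ p ∂μ, p ∈ S := by
      rw [ae_iff]
      exact hS_null
    have hae_u : fu =ᵐ[μ] guF f m := by
      filter_upwards [hae_mem] with p hp
      obtain ⟨i, j, hpc, hgu, _⟩ := step_eq hm hp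
      rw [hgu, (hfu i j p hpc).csSup_eq]
    have hae_l : fl =ᵐ[μ] glF f m := by
      filter_upwards [hae_mem] with p hp
      obtain ⟨i, j, hpc, _, hgl⟩ := step_eq hm hp
      rw [hgl, (hfl i j p hpc).csInf_eq]
    have hIu : ∫ p, fu p ∂μ = ∫ p, guF f m p ∂μ := integral_congr_ae hae_u
    have hIl : ∫ p, fl p ∂μ = ∫ p, glF f m p ∂μ := integral_congr_ae hae_l
    have intu := guF_integrable (f := f) (m := m) μ
    have intl := glF_integrable (f := f) (m := m) μ
    rw [hIu, hIl]
    refine ⟨integral_mono intl intu fun p => (hdiff p).1, ?_, ?_⟩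
    · calc ∫ p, guF f m p ∂μ ≤ ∫ p, (glF f m p + c) ∂μ :=
            integral_mono intu (intl.add (integrable_const c)) fun p => (hdiff p).2.1
        _ = ∫ p, glF f m p ∂μ + c := by
            rw [integral_add intl (integrable_const c), integral_const]
            simp
    · calc ∫ p, guF f m p ∂μ ≤ ∫ _p, M ∂μ :=
            integral_mono intu (integrable_const M) fun p => (hdiff p).2.2
        _ = M := by rw [integral_const]; simp
  -- a copula measure exists
  haveI hP : IsProbabilityMeasure (volume.restrict (Ico (0:ℝ) 1)) := by
    constructor
    rw [Measure.restrict_apply_univ, Real.volume_Ico]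
    norm_num
  set μ₀ : Measure (ℝ × ℝ) :=
    (volume.restrict (Ico (0:ℝ) 1)).prod (volume.restrict (Ico (0:ℝ) 1)) with hμ₀
  have hcop₀ : IsCopulaMeasure μ₀ := by
    refine ⟨inferInstance, ?_, ?_⟩
    · rw [hμ₀, Measure.map_fst_prod, measure_univ, one_smul]
    · rw [hμ₀, Measure.map_snd_prod, measure_univ, one_smul]
  set A := {x : ℝ | ∃ μ : Measure (ℝ × ℝ), IsCopulaMeasure μ ∧ x = ∫ p, fu p ∂μ} with hA
  set B := {x : ℝ | ∃ μ : Measure (ℝ × ℝ), IsCopulaMeasure μ ∧ x = ∫ p, fl p ∂μ} with hB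
  have hA_ne : A.Nonempty := ⟨_, μ₀, hcop₀, rfl⟩
  have hB_ne : B.Nonempty := ⟨_, μ₀, hcop₀, rfl⟩
  have hA_bdd : BddAbove A := by
    refine ⟨M, fun x hx => ?_⟩
    obtain ⟨μ, hμ, rfl⟩ := hx
    exact (key μ hμ).2.2
  have hB_bdd : BddAbove B := by
    refine ⟨M, fun x hx => ?_⟩
    obtain ⟨μ, hμ, rfl⟩ := hx
    exact le_trans (key μ hμ).1 (key μ hμ).2.2
  have h1 : sSup B ≤ sSup A := by
    apply csSup_le hB_ne
    rintro b ⟨μ, hμ, rfl⟩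
    exact le_trans (key μ hμ).1 (le_csSup hA_bdd ⟨μ, hμ, rfl⟩)
  have h2 : sSup A ≤ sSup B + c := by
    apply csSup_le hA_ne
    rintro a ⟨μ, hμ, rfl⟩
    exact le_trans (key μ hμ).2.1 (add_le_add_left (le_csSup hB_bdd ⟨μ, hμ, rfl⟩) c)
  rw [abs_of_nonneg (by linarith)]
  linarith
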